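/- Let S¹ ≤ S² be two parameter values such that g(S¹,y) ≤ g(S²,y) for all y ∈ [0,M] and b(S,x) is non-decreasing in both S and x. Then for every x ∈ (0,M), p^{S¹}_1(x) ≥ p^{S²}_1(x), where p^S_1(x) = D ∫_0^∞ e^{−Dt − ∫_0^t b(S, A^S_u(x)) du} dt is the probability that the first event affecting the initial individual is a death. -/

import Mathlib

open MeasureTheory Set Filter
open scoped Topology

private lemma ext_bootstrap {M x : ℝ} (hx : x ∈ Set.Ioo 0 M)
    {G : ℝ → ℝ} (hG_cont : ContinuousOn G (Set.Icc 0 M))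
    {a : ℝ → ℝ}
    (ha_mem : ∀ t, 0 ≤ t → a t ∈ Set.Ioc 0 M)
    (ha_eq : ∀ t, 0 ≤ t → a t = x + ∫ u in (0:ℝ)..t, G (a u)) :
    ∀ t, 0 ≤ t → IntervalIntegrable (fun u => G (a u)) volume 0 t := by
  obtain ⟨C, hC⟩ := isCompact_Icc.exists_bound_of_continuousOn hG_cont
  set f : ℝ → ℝ := fun u => G (a u) with hf_def
  have hfb : ∀ u, 0 ≤ u → ‖f u‖ ≤ C := fun u hu =>
    hC _ (Ioc_subset_Icc_self (ha_mem u hu))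
  by_contra h
  push_neg at h
  obtain ⟨t0, ht0, hni⟩ := h
  set Tset := {t : ℝ | 0 ≤ t ∧ IntervalIntegrable f volume 0 t} with hTset
  have h0T : (0:ℝ) ∈ Tset := ⟨le_rfl, IntervalIntegrable.refl⟩
  have hdown : ∀ s ∈ Tset, ∀ t, 0 ≤ t → t ≤ s → t ∈ Tset := by
    intro s hs t ht hts
    exact ⟨ht, hs.2.mono_set (by
      rw [uIcc_of_le ht, uIcc_of_le hs.1]
      exact Icc_subset_Icc le_rfl hts)⟩
  have hbdd : ∀ s ∈ Tset, s ≤ t0 := by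
    intro s hs
    by_contra hlt
    push_neg at hlt
    exact hni (hdown s hs t0 ht0 hlt.le).2
  have hbddA : BddAbove Tset := ⟨t0, hbdd⟩
  set T := sSup Tset with hT_def
  have hT0 : 0 ≤ T := le_csSup hbddA h0T
  have hacont : ∀ s ∈ Tset, ContinuousOn a (Icc 0 s) := by
    intro s hs
    have hF : ContinuousOn (fun t => x + ∫ u in (0:ℝ)..t, f u) (Icc 0 s) := by
      have := intervalIntegral.continuousOn_primitive_interval' hs.2
        (by rw [uIcc_of_le hs.1]; exact left_mem_Icc.2 hs.1)
      rw [uIcc_of_le hs.1] at this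
      exact continuousOn_const.add this
    exact hF.congr fun t ht => ha_eq t ht.1
  have hfc : ∀ s ∈ Tset, ContinuousOn f (Icc 0 s) := by
    intro s hs
    exact hG_cont.comp (hacont s hs) fun u hu => Ioc_subset_Icc_self (ha_mem u hu.1)
  have hTm' : IntegrableOn f (Ioc 0 T) volume := by
    have hmeas : AEStronglyMeasurable f (volume.restrict (Set.Ioo 0 T)) := by
      have hcont : ContinuousOn f (Ioo 0 T) := by
        intro u hu
        obtain ⟨s, hsT, hus⟩ := exists_lt_of_lt_csSup ⟨0, h0T⟩ hu.2
        exact ((hfc s hsT u ⟨hu.1.le, hus.le⟩).continuousAt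
          (Icc_mem_nhds hu.1 hus)).continuousWithinAt
      exact hcont.aestronglyMeasurable measurableSet_Ioo
    have hIoo : IntegrableOn f (Ioo 0 T) volume := by
      apply Integrable.mono' (g := fun _ => C)
        (integrableOn_const measure_Ioo_lt_top.ne) hmeas
      exact (ae_restrict_iff' measurableSet_Ioo).2 (ae_of_all _ fun u hu => hfb u hu.1.le)
    exact hIoo.congr_set_ae Ioo_ae_eq_Ioc.symm
  have hTmem : T ∈ Tset :=
    ⟨hT0, (intervalIntegrable_iff_integrableOn_Ioc_of_le hT0).2 hTm'⟩
  have hjunk : ∀ t, T < t → a t = x := by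
    intro t ht
    have ht0' : 0 ≤ t := hT0.trans ht.le
    have hnint : ¬ IntervalIntegrable f volume 0 t := fun hI =>
      absurd (le_csSup hbddA ⟨ht0', hI⟩) (not_le.2 ht)
    rw [ha_eq t ht0', intervalIntegral.integral_undef hnint, add_zero]
  have h2 : IntegrableOn f (Ioc T (T+1)) volume := by
    have hconst : EqOn (fun _ : ℝ => G x) f (Ioc T (T+1)) := fun u hu => by
      simp only [hf_def]; rw [hjunk u hu.1]
    exact (IntegrableOn.congr_fun (integrableOn_const measure_Ioc_lt_top.ne)
      hconst measurableSet_Ioc)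
  have hT1 : IntervalIntegrable f volume 0 (T+1) := by
    rw [intervalIntegrable_iff_integrableOn_Ioc_of_le (by linarith)]
    rw [← Ioc_union_Ioc_eq_Ioc hT0 (by linarith : T ≤ T + 1)]
    exact hTm'.union h2
  have : T + 1 ≤ T := le_csSup hbddA ⟨by linarith, hT1⟩
  linarith

private lemma ext_props {M x : ℝ} (hx : x ∈ Set.Ioo 0 M)
    {G : ℝ → ℝ} (hG_cont : ContinuousOn G (Set.Icc 0 M))
    (hG_nonneg : ∀ y ∈ Set.Ioc 0 M, 0 ≤ G y)
    {a : ℝ → ℝ}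
    (ha_mem : ∀ t, 0 ≤ t → a t ∈ Set.Ioc 0 M)
    (ha_eq : ∀ t, 0 ≤ t → a t = x + ∫ u in (0:ℝ)..t, G (a u)) :
    a 0 = x ∧ (∀ b, 0 ≤ b → ContinuousOn a (Set.Icc 0 b)) ∧
      (∀ s t, 0 ≤ s → s ≤ t → a s ≤ a t) ∧
      (∀ t, 0 ≤ t → HasDerivWithinAt a (G (a t)) (Set.Ici t) t) := by
  have hint := ext_bootstrap hx hG_cont ha_mem ha_eq
  set f : ℝ → ℝ := fun u => G (a u) with hf_def
  have ha0 : a 0 = x := by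
    rw [ha_eq 0 le_rfl, intervalIntegral.integral_same, add_zero]
  have hacont : ∀ b, 0 ≤ b → ContinuousOn a (Icc 0 b) := by
    intro s hs
    have hF : ContinuousOn (fun t => x + ∫ u in (0:ℝ)..t, f u) (Icc 0 s) := by
      have := intervalIntegral.continuousOn_primitive_interval' (hint s hs)
        (by rw [uIcc_of_le hs]; exact left_mem_Icc.2 hs)
      rw [uIcc_of_le hs] at this
      exact continuousOn_const.add this
    exact hF.congr fun t ht => ha_eq t ht.1
  have hfc : ∀ s, 0 ≤ s → ContinuousOn f (Icc 0 s) := fun s hs =>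
    hG_cont.comp (hacont s hs) fun u hu => Ioc_subset_Icc_self (ha_mem u hu.1)
  refine ⟨ha0, hacont, ?_, ?_⟩
  · intro s t hs hst
    have ht : 0 ≤ t := hs.trans hst
    have hsub : (∫ u in (0:ℝ)..t, f u) - ∫ u in (0:ℝ)..s, f u = ∫ u in s..t, f u :=
      intervalIntegral.integral_interval_sub_left (hint t ht) (hint s hs)
    have hnn : 0 ≤ ∫ u in s..t, f u := by
      apply intervalIntegral.integral_nonneg hst
      intro u hu
      exact hG_nonneg _ (ha_mem u (hs.trans hu.1))
    have h1 := ha_eq s hs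
    have h2 := ha_eq t ht
    linarith
  · intro t ht
    have hfi := hint t ht
    have hfc' := hfc (t+1) (by linarith)
    have hmem : Icc (0:ℝ) (t+1) ∈ 𝓝[Set.Ici t] t :=
      mem_nhdsWithin.2 ⟨Iio (t+1), isOpen_Iio, lt_add_one t,
        fun u hu => ⟨ht.trans hu.2, hu.1.le⟩⟩
    have hmem' : Icc (0:ℝ) (t+1) ∈ 𝓝[Set.Ioi t] t :=
      nhdsWithin_mono t Ioi_subset_Ici_self hmem
    have hmeasat : StronglyMeasurableAtFilter f (𝓝[Set.Ioi t] t) volume :=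
      ⟨Icc 0 (t+1), hmem', hfc'.aestronglyMeasurable measurableSet_Icc⟩
    have hcw : ContinuousWithinAt f (Set.Ioi t) t :=
      ((hfc' t ⟨ht, by linarith⟩).mono_of_mem_nhdsWithin hmem).mono Ioi_subset_Ici_self
    have hder := intervalIntegral.integral_hasDerivWithinAt_right (s := Set.Ici t)
      (t := Set.Ioi t) hfi hmeasat hcw
    have hd2 : HasDerivWithinAt (fun r => x + ∫ u in (0:ℝ)..r, f u) (f t) (Set.Ici t) t :=
      hder.const_add x
    exact hd2.congr (fun y hy => ha_eq y (ht.trans hy)) (ha_eq t ht)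

private lemma ext_comp {M x : ℝ} (hx : x ∈ Set.Ioo 0 M)
    {G1 G2 : ℝ → ℝ}
    (hG2_diff : ContDiffOn ℝ 1 G2 (Set.Ioo 0 M))
    (hG_le : ∀ y ∈ Set.Icc 0 M, G1 y ≤ G2 y)
    {a1 a2 : ℝ → ℝ}
    (h1mem : ∀ t, 0 ≤ t → a1 t ∈ Set.Ioc 0 M)
    (h2mem : ∀ t, 0 ≤ t → a2 t ∈ Set.Ioc 0 M)
    (h10 : a1 0 = x) (h20 : a2 0 = x)
    (h1cont : ∀ b, 0 ≤ b → ContinuousOn a1 (Set.Icc 0 b))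
    (h2cont : ∀ b, 0 ≤ b → ContinuousOn a2 (Set.Icc 0 b))
    (h1mono : ∀ s t, 0 ≤ s → s ≤ t → a1 s ≤ a1 t)
    (h2mono : ∀ s t, 0 ≤ s → s ≤ t → a2 s ≤ a2 t)
    (h1deriv : ∀ t, 0 ≤ t → HasDerivWithinAt a1 (G1 (a1 t)) (Set.Ici t) t)
    (h2deriv : ∀ t, 0 ≤ t → HasDerivWithinAt a2 (G2 (a2 t)) (Set.Ici t) t) :
    ∀ t, 0 ≤ t → a1 t ≤ a2 t := by
  by_contra h
  push_neg at h
  obtain ⟨t0, ht0, hlt⟩ := h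
  set d : ℝ → ℝ := fun t => a1 t - a2 t with hd_def
  have hd0 : d 0 = 0 := by simp [hd_def, h10, h20]
  have hdt0 : 0 < d t0 := sub_pos.2 hlt
  have hd_cont : ContinuousOn d (Icc 0 t0) :=
    (h1cont t0 ht0).sub (h2cont t0 ht0)
  -- the last time before t0 at which a1 ≤ a2
  set Z := {s : ℝ | s ∈ Icc 0 t0 ∧ d s ≤ 0} with hZ_def
  have hZne : Z.Nonempty := ⟨0, ⟨le_rfl, ht0⟩, hd0.le⟩
  have hZbdd : BddAbove Z := ⟨t0, fun s hs => hs.1.2⟩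
  have hZclosed : IsClosed Z := by
    have : Z = Icc 0 t0 ∩ d ⁻¹' (Iic 0) := by
      ext s; simp [hZ_def, and_comm]
    rw [this]
    exact hd_cont.preimage_isClosed_of_isClosed isClosed_Icc isClosed_Iic
  set τ := sSup Z with hτ_def
  have hτZ : τ ∈ Z := hZclosed.csSup_mem hZne hZbdd
  have hτ0 : 0 ≤ τ := hτZ.1.1
  have hτt0 : τ ≤ t0 := hτZ.1.2
  have hτlt : τ < t0 := by
    rcases lt_or_eq_of_le hτt0 with h | h
    · exact h
    · exfalso; rw [h] at hτZ; linarith [hτZ.2]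
  have hdpos : ∀ s, τ < s → s ≤ t0 → 0 < d s := by
    intro s hs1 hs2
    by_contra hns
    push_neg at hns
    exact absurd (le_csSup hZbdd ⟨⟨hτ0.trans hs1.le, hs2⟩, hns⟩) (not_le.2 hs1)
  have hdτ : d τ = 0 := by
    rcases lt_or_eq_of_le hτZ.2 with h | h
    · exfalso
      have hcw : ContinuousWithinAt d (Ioc τ t0) τ :=
        (hd_cont τ hτZ.1).mono (Ioc_subset_Icc_self.trans (Icc_subset_Icc hτ0 le_rfl))
      rw [ContinuousWithinAt, nhdsWithin_Ioc_eq_nhdsGT hτlt] at hcw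
      have hev : ∀ᶠ s in 𝓝[>] τ, d s < 0 := hcw (Iio_mem_nhds h)
      have hev2 : ∀ᶠ s in 𝓝[>] τ, s ∈ Ioc τ t0 := Ioc_mem_nhdsGT hτlt
      obtain ⟨s, hs1, hs2⟩ := (hev.and hev2).exists
      exact absurd (hdpos s hs2.1 hs2.2) (not_lt.2 hs1.le)
    · exact h
  have haτ : a1 τ = a2 τ := by
    have h' : a1 τ - a2 τ = 0 := hdτ
    linarith
  set c := a1 τ with hc_def
  have hc_mem : c ∈ Ioc 0 M := h1mem τ hτ0
  have hcM : c < M := by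
    rcases lt_or_eq_of_le hc_mem.2 with h | h
    · exact h
    · exfalso
      have h2 : M ≤ a2 t0 :=
        calc M = a1 τ := h.symm
        _ = a2 τ := haτ
        _ ≤ a2 t0 := h2mono τ t0 hτ0 hτt0
      have h3 : d t0 ≤ 0 := by
        have h4 : a1 t0 ≤ M := (h1mem t0 ht0).2
        show a1 t0 - a2 t0 ≤ 0
        linarith
      linarith
  -- choose σ' ∈ (τ, t0] with a1 σ' < M and 0 < d σ'
  obtain ⟨σ', hσ'1, hσ'2, hσ'3, hσ'4⟩ :
      ∃ σ', τ < σ' ∧ σ' ≤ t0 ∧ a1 σ' < M ∧ 0 < d σ' := by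
    rcases lt_or_eq_of_le (h1mem t0 ht0).2 with h | h
    · exact ⟨t0, hτlt, le_rfl, h, hdt0⟩
    · set W := {s : ℝ | s ∈ Icc τ t0 ∧ a1 s = M} with hW_def
      have hWne : W.Nonempty := ⟨t0, ⟨hτt0, le_rfl⟩, h⟩
      have hWbdd : BddBelow W := ⟨τ, fun s hs => hs.1.1⟩
      have hWclosed : IsClosed W := by
        have h1c : ContinuousOn a1 (Icc τ t0) :=
          (h1cont t0 ht0).mono (Icc_subset_Icc hτ0 le_rfl)
        have : W = Icc τ t0 ∩ a1 ⁻¹' {M} := by ext s; simp [hW_def, and_comm]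
        rw [this]
        exact h1c.preimage_isClosed_of_isClosed isClosed_Icc isClosed_singleton
      set σ := sInf W with hσ_def
      have hσW : σ ∈ W := hWclosed.csInf_mem hWne hWbdd
      have hτσ : τ < σ := by
        rcases lt_or_eq_of_le hσW.1.1 with h' | h'
        · exact h'
        · exfalso; rw [← h'] at hσW; exact absurd hσW.2 (ne_of_lt hcM)
      refine ⟨(τ + σ)/2, by linarith, by linarith [hσW.1.2], ?_, ?_⟩
      · rcases lt_or_eq_of_le (h1mem ((τ + σ)/2) (by linarith)).2 with h' | h'
        · exact h'
        · exfalso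
          have : (τ + σ)/2 ∈ W := ⟨⟨by linarith, by linarith [hσW.1.2]⟩, h'⟩
          have := csInf_le hWbdd this
          linarith
      · exact hdpos _ (by linarith) (by linarith [hσW.1.2])
  set m := a1 σ' with hm_def
  have hσ'0 : 0 ≤ σ' := hτ0.trans hσ'1.le
  have hcm : c ≤ m := h1mono τ σ' hτ0 hσ'1.le
  have hsub : Icc c m ⊆ Ioo 0 M := fun y hy => ⟨hc_mem.1.trans_le hy.1, hy.2.trans_lt hσ'3⟩
  have h1in : ∀ s ∈ Icc τ σ', a1 s ∈ Icc c m :=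
    fun s hs => ⟨h1mono τ s hτ0 hs.1, h1mono s σ' (hτ0.trans hs.1) hs.2⟩
  have h2le1 : ∀ s ∈ Icc τ σ', a2 s ≤ a1 s := by
    intro s hs
    rcases eq_or_lt_of_le hs.1 with h' | h'
    · rw [← h']; exact haτ.ge
    · exact (sub_pos.1 (hdpos s h' (hs.2.trans hσ'2))).le
  have h2in : ∀ s ∈ Icc τ σ', a2 s ∈ Icc c m := by
    intro s hs
    refine ⟨?_, (h2le1 s hs).trans (h1in s hs).2⟩
    calc c = a2 τ := haτ
    _ ≤ a2 s := h2mono τ s hτ0 hs.1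
  -- Lipschitz bound for G2 on Icc c m
  have hderivG2 : ∀ y ∈ Icc c m, HasDerivWithinAt G2 (deriv G2 y) (Icc c m) y := by
    intro y hy
    have : DifferentiableAt ℝ G2 y :=
      (hG2_diff.differentiableOn one_ne_zero).differentiableAt (isOpen_Ioo.mem_nhds (hsub hy))
    exact this.hasDerivAt.hasDerivWithinAt
  obtain ⟨K, hK⟩ := isCompact_Icc.exists_bound_of_continuousOn
    ((hG2_diff.continuousOn_deriv_of_isOpen isOpen_Ioo le_rfl).mono hsub)
  have hK0 : 0 ≤ K := le_trans (norm_nonneg _) (hK c (left_mem_Icc.2 hcm))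
  have hlip : ∀ y ∈ Icc c m, ∀ z ∈ Icc c m, ‖G2 z - G2 y‖ ≤ K * ‖z - y‖ := fun y hy z hz =>
    (convex_Icc c m).norm_image_sub_le_of_norm_hasDerivWithin_le hderivG2 hK hy hz
  -- Grönwall
  have hgron : ∀ s ∈ Icc τ σ', d s ≤ gronwallBound 0 K 0 (s - τ) := by
    apply le_gronwallBound_of_liminf_deriv_right_le
      (f' := fun s => G1 (a1 s) - G2 (a2 s))
    · exact (hd_cont.mono (Icc_subset_Icc hτ0 (hσ'2))).mono
        (Icc_subset_Icc le_rfl le_rfl)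
    · intro s hs r hr
      have hs0 : 0 ≤ s := hτ0.trans hs.1
      have hder : HasDerivWithinAt d (G1 (a1 s) - G2 (a2 s)) (Set.Ici s) s :=
        (h1deriv s hs0).sub (h2deriv s hs0)
      rw [hasDerivWithinAt_iff_tendsto_slope] at hder
      have hss : Set.Ici s \ {s} = Set.Ioi s := by
        ext y; simp [lt_iff_le_and_ne, and_comm, eq_comm]
      rw [hss] at hder
      have hev : ∀ᶠ z in 𝓝[>] s, slope d s z < r := hder (Iio_mem_nhds hr)
      apply hev.frequently.mono
      intro z hz
      rwa [slope_def_field, div_eq_inv_mul] at hz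
    · exact hdτ.le
    · intro s hs
      have hs' : s ∈ Icc τ σ' := ⟨hs.1, hs.2.le⟩
      have h1 : G1 (a1 s) ≤ G2 (a1 s) :=
        hG_le _ ⟨(h1mem s (hτ0.trans hs.1)).1.le, (h1mem s (hτ0.trans hs.1)).2⟩
      have h2 : G2 (a1 s) - G2 (a2 s) ≤ K * d s := by
        have := hlip _ (h2in s hs') _ (h1in s hs')
        have hds : 0 ≤ d s := sub_nonneg.2 (h2le1 s hs')
        rw [Real.norm_eq_abs, Real.norm_eq_abs, abs_of_nonneg hds] at this
        calc G2 (a1 s) - G2 (a2 s) ≤ |G2 (a1 s) - G2 (a2 s)| := le_abs_self _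
        _ ≤ K * d s := this
      linarith
  have := hgron σ' ⟨hσ'1.le, le_rfl⟩
  rw [gronwallBound_ε0_δ0] at this
  linarith

/-- Comparison of the first-generation extinction probabilities: if `g(S¹,·) ≤ g(S²,·)`
and `b` is non-decreasing in both `S` and `x`, then
`p^{S¹}_1(x) = D∫_0^∞ e^{−Dt−∫_0^t b(S¹,A^{S¹}_u(x))du} dt ≥ p^{S²}_1(x)`. -/
theorem statement19 (M D : ℝ) (hM : 0 < M) (hD : 0 < D)
    (S1 S2 : ℝ) (hS1 : 0 < S1) (hS12 : S1 ≤ S2)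
    (b : ℝ → ℝ → ℝ) (g : ℝ → ℝ → ℝ)
    (hb_cont : ∀ S : ℝ, 0 < S → ContinuousOn (b S) (Set.Icc 0 M))
    (hb_nonneg : ∀ S : ℝ, 0 < S → ∀ x ∈ Set.Icc (0:ℝ) M, 0 ≤ b S x)
    (hb_monoS : ∀ x ∈ Set.Icc (0:ℝ) M, ∀ Sa Sb : ℝ, 0 < Sa → Sa ≤ Sb → b Sa x ≤ b Sb x)
    (hb_monox : ∀ S : ℝ, 0 < S → MonotoneOn (b S) (Set.Icc 0 M))
    (hg_cont : ∀ S : ℝ, 0 < S → ContinuousOn (g S) (Set.Icc 0 M))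
    (hg_diff : ∀ S : ℝ, 0 < S → ContDiffOn ℝ 1 (g S) (Set.Ioo 0 M))
    (hg0 : ∀ S : ℝ, 0 < S → g S 0 = 0) (hgM : ∀ S : ℝ, 0 < S → g S M = 0)
    (hg_pos : ∀ S : ℝ, 0 < S → ∀ x ∈ Set.Ioo (0:ℝ) M, 0 < g S x)
    (hg_le : ∀ y ∈ Set.Icc (0:ℝ) M, g S1 y ≤ g S2 y)
    (A : ℝ → ℝ → ℝ → ℝ)
    (hA_mem : ∀ S : ℝ, 0 < S → ∀ x ∈ Set.Ioo (0:ℝ) M, ∀ t : ℝ, 0 ≤ t →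
      A S t x ∈ Set.Ioc 0 M)
    (hA_eq : ∀ S : ℝ, 0 < S → ∀ x ∈ Set.Ioo (0:ℝ) M, ∀ t : ℝ, 0 ≤ t →
      A S t x = x + ∫ u in (0:ℝ)..t, g S (A S u x)) :
    ∀ x ∈ Set.Ioo (0:ℝ) M,
      (D * ∫ t in Set.Ioi (0:ℝ),
          Real.exp (-(D * t) - ∫ u in (0:ℝ)..t, b S2 (A S2 u x)))
        ≤ D * ∫ t in Set.Ioi (0:ℝ),
            Real.exp (-(D * t) - ∫ u in (0:ℝ)..t, b S1 (A S1 u x)) := by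
  intro x hx
  have hS2 : 0 < S2 := hS1.trans_le hS12
  have hG_nonneg : ∀ S : ℝ, 0 < S → ∀ y ∈ Set.Ioc (0:ℝ) M, 0 ≤ g S y := by
    intro S hS y hy
    rcases lt_or_eq_of_le hy.2 with h | h
    · exact (hg_pos S hS y ⟨hy.1, h⟩).le
    · rw [h]; exact le_of_eq (hgM S hS).symm
  obtain ⟨h10, h1cont, h1mono, h1deriv⟩ :=
    ext_props hx (hg_cont S1 hS1) (hG_nonneg S1 hS1)
      (hA_mem S1 hS1 x hx) (hA_eq S1 hS1 x hx)
  obtain ⟨h20, h2cont, h2mono, h2deriv⟩ :=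
    ext_props hx (hg_cont S2 hS2) (hG_nonneg S2 hS2)
      (hA_mem S2 hS2 x hx) (hA_eq S2 hS2 x hx)
  have hcomp : ∀ t, 0 ≤ t → A S1 t x ≤ A S2 t x :=
    ext_comp hx (hg_diff S2 hS2) hg_le (hA_mem S1 hS1 x hx) (hA_mem S2 hS2 x hx)
      h10 h20 h1cont h2cont h1mono h2mono h1deriv h2deriv
  -- integrands of the inner integrals
  have hbc : ∀ S : ℝ, 0 < S → (∀ tA : ℝ → ℝ, (∀ b', 0 ≤ b' → ContinuousOn tA (Icc 0 b')) →
      (∀ t, 0 ≤ t → tA t ∈ Set.Ioc 0 M) →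
      ∀ t, 0 ≤ t → ContinuousOn (fun u => b S (tA u)) (Icc 0 t)) := by
    intro S hS tA htA hmem t ht
    exact (hb_cont S hS).comp (htA t ht) fun u hu => Ioc_subset_Icc_self (hmem u hu.1)
  have hbc1 := hbc S1 hS1 (fun t => A S1 t x) h1cont (hA_mem S1 hS1 x hx)
  have hbc2 := hbc S2 hS2 (fun t => A S2 t x) h2cont (hA_mem S2 hS2 x hx)
  have hint1 : ∀ t, 0 ≤ t →
      IntervalIntegrable (fun u => b S1 (A S1 u x)) volume 0 t := by
    intro t ht
    exact ((hbc1 t ht).mono (by rw [uIcc_of_le ht])).intervalIntegrable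
  have hint2 : ∀ t, 0 ≤ t →
      IntervalIntegrable (fun u => b S2 (A S2 u x)) volume 0 t := by
    intro t ht
    exact ((hbc2 t ht).mono (by rw [uIcc_of_le ht])).intervalIntegrable
  set B1 : ℝ → ℝ := fun t => ∫ u in (0:ℝ)..t, b S1 (A S1 u x) with hB1_def
  set B2 : ℝ → ℝ := fun t => ∫ u in (0:ℝ)..t, b S2 (A S2 u x) with hB2_def
  have hBle : ∀ t, 0 ≤ t → B1 t ≤ B2 t := by
    intro t ht
    apply intervalIntegral.integral_mono_on ht (hint1 t ht) (hint2 t ht)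
    intro u hu
    have hm1 : A S1 u x ∈ Icc 0 M := Ioc_subset_Icc_self (hA_mem S1 hS1 x hx u hu.1)
    have hm2 : A S2 u x ∈ Icc 0 M := Ioc_subset_Icc_self (hA_mem S2 hS2 x hx u hu.1)
    calc b S1 (A S1 u x) ≤ b S1 (A S2 u x) := hb_monox S1 hS1 hm1 hm2 (hcomp u hu.1)
    _ ≤ b S2 (A S2 u x) := hb_monoS _ hm2 S1 S2 hS1 hS12
  have hB1nn : ∀ t, 0 ≤ t → 0 ≤ B1 t := by
    intro t ht
    apply intervalIntegral.integral_nonneg ht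
    intro u hu
    exact hb_nonneg S1 hS1 _ (Ioc_subset_Icc_self (hA_mem S1 hS1 x hx u hu.1))
  have hB2nn : ∀ t, 0 ≤ t → 0 ≤ B2 t := by
    intro t ht
    apply intervalIntegral.integral_nonneg ht
    intro u hu
    exact hb_nonneg S2 hS2 _ (Ioc_subset_Icc_self (hA_mem S2 hS2 x hx u hu.1))
  -- continuity of the primitives on Ici 0
  have hBcont : ∀ (h : ℝ → ℝ), (∀ t, 0 ≤ t → IntervalIntegrable h volume 0 t) →
      ContinuousOn (fun t => ∫ u in (0:ℝ)..t, h u) (Ici 0) := by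
    intro h hh t ht
    have ht' : (0:ℝ) ≤ t := ht
    have hIcc : ContinuousOn (fun t => ∫ u in (0:ℝ)..t, h u) (Icc 0 (t+1)) := by
      have := intervalIntegral.continuousOn_primitive_interval' (hh (t+1) (by linarith))
        (by rw [uIcc_of_le (by linarith : (0:ℝ) ≤ t+1)]
            exact left_mem_Icc.2 (by linarith))
      rwa [uIcc_of_le (by linarith : (0:ℝ) ≤ t+1)] at this
    have hmem : Icc (0:ℝ) (t+1) ∈ 𝓝[Set.Ici 0] t :=
      mem_nhdsWithin.2 ⟨Iio (t+1), isOpen_Iio, lt_add_one t,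
        fun u hu => ⟨hu.2, hu.1.le⟩⟩
    exact (hIcc t ⟨ht', by linarith⟩).mono_of_mem_nhdsWithin hmem
  have hB1cont : ContinuousOn B1 (Ici 0) := hBcont _ hint1
  have hB2cont : ContinuousOn B2 (Ici 0) := hBcont _ hint2
  -- the integrands over Ioi 0
  set F1 : ℝ → ℝ := fun t => Real.exp (-(D * t) - B1 t) with hF1_def
  set F2 : ℝ → ℝ := fun t => Real.exp (-(D * t) - B2 t) with hF2_def
  have hFcont : ∀ (B : ℝ → ℝ), ContinuousOn B (Ici 0) →
      ContinuousOn (fun t => Real.exp (-(D * t) - B t)) (Ici 0) := by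
    intro B hB
    apply Real.continuous_exp.comp_continuousOn
    exact ((continuous_const.mul continuous_id).neg.continuousOn).sub hB
  have hFint : ∀ (B : ℝ → ℝ), ContinuousOn B (Ici 0) → (∀ t, 0 ≤ t → 0 ≤ B t) →
      IntegrableOn (fun t => Real.exp (-(D * t) - B t)) (Ioi 0) volume := by
    intro B hB hBnn
    apply Integrable.mono' (exp_neg_integrableOn_Ioi 0 hD)
    · exact ((hFcont B hB).mono Ioi_subset_Ici_self).aestronglyMeasurable measurableSet_Ioi
    · refine (ae_restrict_iff' measurableSet_Ioi).2 (ae_of_all _ fun t ht => ?_)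
      rw [Real.norm_eq_abs, Real.abs_exp]
      apply Real.exp_le_exp.2
      have := hBnn t (le_of_lt ht)
      have : -(D * t) - B t ≤ -(D * t) := by linarith
      linarith [this, neg_mul D t]
  have hF1int : IntegrableOn F1 (Ioi 0) volume := hFint B1 hB1cont hB1nn
  have hF2int : IntegrableOn F2 (Ioi 0) volume := hFint B2 hB2cont hB2nn
  apply mul_le_mul_of_nonneg_left _ hD.le
  apply setIntegral_mono_on hF2int hF1int measurableSet_Ioi
  intro t ht
  apply Real.exp_le_exp.2
  have := hBle t (le_of_lt ht)
  linarith
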